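/- As T → 0⁺, z_max(T) → +∞, z_min(T) → +∞, while the difference z_max(T) - z_min(T) remains bounded. -/

import Mathlib

open Matrix Set Filter
open scoped Topology

noncomputable def Acas (a₁ a₂ a₃ g₁ g₂ : ℝ) : Matrix (Fin 3) (Fin 3) ℝ :=
  !![-a₁, 0, 0; g₁, -a₂, 0; 0, g₂, -a₃]

def Bcas : Fin 3 → ℝ := ![1, 0, 0]

/-- impulse response g(t) = C e^{tA} B with C = (0,0,1) -/
noncomputable def impResp (a₁ a₂ a₃ g₁ g₂ : ℝ) (t : ℝ) : ℝ :=
  ((NormedSpace.exp (t • Acas a₁ a₂ a₃ g₁ g₂)) *ᵥ Bcas) 2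

/-- z(τ,T) = C e^{Aτ} (I - e^{AT})⁻¹ B -/
noncomputable def zfun (a₁ a₂ a₃ g₁ g₂ : ℝ) (τ T : ℝ) : ℝ :=
  ((NormedSpace.exp (τ • Acas a₁ a₂ a₃ g₁ g₂) *
    (1 - NormedSpace.exp (T • Acas a₁ a₂ a₃ g₁ g₂))⁻¹) *ᵥ Bcas) 2

noncomputable def zmaxF (a₁ a₂ a₃ g₁ g₂ T : ℝ) : ℝ :=
  sSup ((fun τ => zfun a₁ a₂ a₃ g₁ g₂ τ T) '' Set.Icc 0 T)

noncomputable def zminF (a₁ a₂ a₃ g₁ g₂ T : ℝ) : ℝ :=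
  sInf ((fun τ => zfun a₁ a₂ a₃ g₁ g₂ τ T) '' Set.Icc 0 T)


lemma diag3 (x y z : ℝ) : Matrix.diagonal ![x,y,z] = !![x,0,0; 0,y,0; 0,0,z] := by
  ext i j
  fin_cases i <;> fin_cases j <;>
    simp [Matrix.diagonal, Matrix.vecHead, Matrix.vecTail]

section
variable (a₁ a₂ a₃ g₁ g₂ p q r : ℝ)

noncomputable def Pm : Matrix (Fin 3) (Fin 3) ℝ := !![1,0,0; p,1,0; r,q,1]
noncomputable def Pim : Matrix (Fin 3) (Fin 3) ℝ := !![1,0,0; -p,1,0; p*q-r,-q,1]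

lemma hPPi : Pm p q r * Pim p q r = 1 := by
  simp only [Pm, Pim, Matrix.mul_fin_three, Matrix.one_fin_three]
  ext i j; fin_cases i <;> fin_cases j <;> simp [Matrix.vecHead, Matrix.vecTail] <;> ring1

lemma hPiP : Pim p q r * Pm p q r = 1 := by
  simp only [Pm, Pim, Matrix.mul_fin_three, Matrix.one_fin_three]
  ext i j; fin_cases i <;> fin_cases j <;> simp [Matrix.vecHead, Matrix.vecTail] <;> ring1

lemma hAdecomp (hp : p*(a₂-a₁) = g₁) (hq : q*(a₃-a₂) = g₂) (hr : r*(a₃-a₁) = p*g₂) :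
    Acas a₁ a₂ a₃ g₁ g₂ = Pm p q r * Matrix.diagonal ![-a₁,-a₂,-a₃] * Pim p q r := by
  rw [diag3]
  simp only [Acas, Pm, Pim, Matrix.mul_fin_three]
  ext i j
  fin_cases i <;> fin_cases j <;> simp [Matrix.vecHead, Matrix.vecTail] <;>
    first
      | ring1
      | linear_combination hp
      | linear_combination -hp
      | linear_combination hq
      | linear_combination -hq
      | linear_combination hr - p*hq
      | linear_combination p*hq - hr
end

section
variable (a₁ a₂ a₃ g₁ g₂ p q r : ℝ)

noncomputable def Umat (p q r : ℝ) : (Matrix (Fin 3) (Fin 3) ℝ)ˣ :=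
  ⟨Pm p q r, Pim p q r, hPPi p q r, hPiP p q r⟩

lemma exp_Acas (hp : p*(a₂-a₁) = g₁) (hq : q*(a₃-a₂) = g₂) (hr : r*(a₃-a₁) = p*g₂) (t : ℝ) :
    NormedSpace.exp (t • Acas a₁ a₂ a₃ g₁ g₂) =
      Pm p q r * Matrix.diagonal ![Real.exp (-(a₁*t)), Real.exp (-(a₂*t)), Real.exp (-(a₃*t))] *
        Pim p q r := by
  have h1 : t • Acas a₁ a₂ a₃ g₁ g₂ =
      (Umat p q r : Matrix (Fin 3) (Fin 3) ℝ) * Matrix.diagonal (t • ![-a₁,-a₂,-a₃]) *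
        ((Umat p q r)⁻¹ : (Matrix (Fin 3) (Fin 3) ℝ)ˣ) := by
    rw [hAdecomp a₁ a₂ a₃ g₁ g₂ p q r hp hq hr, Matrix.diagonal_smul]
    show t • (Pm p q r * _ * Pim p q r) = Pm p q r * t • _ * Pim p q r
    rw [Matrix.mul_smul, Matrix.smul_mul]
  have hv : (NormedSpace.exp (t • ![-a₁,-a₂,-a₃]) : Fin 3 → ℝ) =
      ![Real.exp (-(a₁*t)), Real.exp (-(a₂*t)), Real.exp (-(a₃*t))] := by
    funext i
    fin_cases i <;>
      simp [Pi.exp_def, ← Real.exp_eq_exp_ℝ, Matrix.vecHead, Matrix.vecTail] <;>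
      ring_nf
  rw [h1, Matrix.exp_units_conj, Matrix.exp_diagonal, hv]
  rfl
end





lemma vec3_mul (u₁ u₂ u₃ v₁ v₂ v₃ : ℝ) :
    ![u₁,u₂,u₃] * ![v₁,v₂,v₃] = ![u₁*v₁, u₂*v₂, u₃*v₃] := by
  funext i; fin_cases i <;> simp [Matrix.vecHead, Matrix.vecTail]

lemma vec3_sub (u₁ u₂ u₃ v₁ v₂ v₃ : ℝ) :
    Matrix.diagonal ![u₁,u₂,u₃] - Matrix.diagonal ![v₁,v₂,v₃] =
      Matrix.diagonal ![u₁-v₁, u₂-v₂, u₃-v₃] := by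
  ext i j
  fin_cases i <;> fin_cases j <;>
    simp [Matrix.diagonal, Matrix.vecHead, Matrix.vecTail]

lemma diag_one3 : Matrix.diagonal ![(1:ℝ),1,1] = 1 := by
  ext i j
  fin_cases i <;> fin_cases j <;>
    simp [Matrix.diagonal, Matrix.vecHead, Matrix.vecTail, Matrix.one_apply]

section
variable (a₁ a₂ a₃ g₁ g₂ p q r : ℝ)

lemma key_mul (u v : Fin 3 → ℝ) :
    (Pm p q r * Matrix.diagonal u * Pim p q r) * (Pm p q r * Matrix.diagonal v * Pim p q r) =
      Pm p q r * Matrix.diagonal (u * v) * Pim p q r := by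
  have h : Pim p q r * (Pm p q r * Matrix.diagonal v * Pim p q r) =
      Matrix.diagonal v * Pim p q r := by
    rw [← Matrix.mul_assoc, ← Matrix.mul_assoc, hPiP, Matrix.one_mul]
  rw [Matrix.mul_assoc (Pm p q r * Matrix.diagonal u), h, ← Matrix.mul_assoc,
    Matrix.mul_assoc (Pm p q r), Matrix.diagonal_mul_diagonal]
  rfl

lemma one_sub_exp_pos {a T : ℝ} (ha : 0 < a) (hT : 0 < T) :
    (0:ℝ) < 1 - Real.exp (-(a*T)) := by
  have h : Real.exp (-(a*T)) < Real.exp 0 := Real.exp_lt_exp.mpr (by nlinarith)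
  rw [Real.exp_zero] at h; linarith

lemma zfun_eq (hp : p*(a₂-a₁) = g₁) (hq : q*(a₃-a₂) = g₂) (hr : r*(a₃-a₁) = p*g₂)
    (ha₁ : 0 < a₁) (ha₂ : 0 < a₂) (ha₃ : 0 < a₃) {T : ℝ} (hT : 0 < T) (τ : ℝ) :
    zfun a₁ a₂ a₃ g₁ g₂ τ T =
      r * (Real.exp (-(a₁*τ)) / (1 - Real.exp (-(a₁*T))))
      - p*q * (Real.exp (-(a₂*τ)) / (1 - Real.exp (-(a₂*T))))
      + (p*q-r) * (Real.exp (-(a₃*τ)) / (1 - Real.exp (-(a₃*T)))) := by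
  have hd₁ := one_sub_exp_pos ha₁ hT
  have hd₂ := one_sub_exp_pos ha₂ hT
  have hd₃ := one_sub_exp_pos ha₃ hT
  have hone : (1 : Matrix (Fin 3) (Fin 3) ℝ) - NormedSpace.exp (T • Acas a₁ a₂ a₃ g₁ g₂) =
      Pm p q r * Matrix.diagonal ![1 - Real.exp (-(a₁*T)), 1 - Real.exp (-(a₂*T)),
        1 - Real.exp (-(a₃*T))] * Pim p q r := by
    rw [exp_Acas a₁ a₂ a₃ g₁ g₂ p q r hp hq hr T]
    have h1 : (1 : Matrix (Fin 3) (Fin 3) ℝ) =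
        Pm p q r * Matrix.diagonal ![1,1,1] * Pim p q r := by
      rw [diag_one3, Matrix.mul_one, hPPi]
    rw [h1, ← Matrix.sub_mul, ← Matrix.mul_sub, vec3_sub]
  have hinv : (1 - NormedSpace.exp (T • Acas a₁ a₂ a₃ g₁ g₂))⁻¹ =
      Pm p q r * Matrix.diagonal ![(1 - Real.exp (-(a₁*T)))⁻¹, (1 - Real.exp (-(a₂*T)))⁻¹,
        (1 - Real.exp (-(a₃*T)))⁻¹] * Pim p q r := by
    apply Matrix.inv_eq_right_inv
    rw [hone, key_mul, vec3_mul, mul_inv_cancel₀ hd₁.ne', mul_inv_cancel₀ hd₂.ne',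
      mul_inv_cancel₀ hd₃.ne', diag_one3, Matrix.mul_one, hPPi]
  unfold zfun
  rw [hinv, exp_Acas a₁ a₂ a₃ g₁ g₂ p q r hp hq hr τ, key_mul, vec3_mul, diag3]
  simp only [Pm, Pim, Matrix.mul_fin_three]
  simp [Matrix.mulVec, dotProduct, Fin.sum_univ_three, Bcas, Matrix.vecHead,
    Matrix.vecTail, div_eq_mul_inv]
  ring
end



lemma tendsto_ratio {a : ℝ} (ha : 0 < a) :
    Tendsto (fun T => T / (1 - Real.exp (-(a*T)))) (𝓝[>] (0:ℝ)) (𝓝 a⁻¹) := by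
  have h1 : HasDerivAt (fun T : ℝ => -(a*T)) (-a) 0 := by
    simpa using ((hasDerivAt_id (0:ℝ)).const_mul (-a))
  have h2 : HasDerivAt (fun T : ℝ => Real.exp (-(a*T))) (-a) 0 := by
    simpa using h1.exp
  have h3 : HasDerivAt (fun T : ℝ => 1 - Real.exp (-(a*T))) a 0 := by
    simpa using h2.const_sub 1
  rw [hasDerivAt_iff_tendsto_slope] at h3
  have h4 : Tendsto (slope (fun T : ℝ => 1 - Real.exp (-(a*T))) 0) (𝓝[>] (0:ℝ)) (𝓝 a) :=
    h3.mono_left (nhdsWithin_mono 0 (fun x hx => ne_of_gt hx))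
  have h5 := h4.inv₀ ha.ne'
  refine h5.congr' ?_
  filter_upwards [self_mem_nhdsWithin] with T (hT : 0 < T)
  rw [slope_def_field]
  simp

lemma term_bound (w a τ T : ℝ) (ha : 0 < a) (hT : 0 < T) (h0 : 0 ≤ τ) (hτ : τ ≤ T) :
    |w * (Real.exp (-(a*τ)) / (1 - Real.exp (-(a*T))))
      - w * (Real.exp (-(a*0)) / (1 - Real.exp (-(a*T))))| ≤ |w| := by
  have hd : 0 < 1 - Real.exp (-(a*T)) := one_sub_exp_pos ha hT
  have hE : Real.exp (-(a*T)) ≤ Real.exp (-(a*τ)) :=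
    Real.exp_le_exp.mpr (by nlinarith)
  have hE1 : Real.exp (-(a*τ)) ≤ 1 := by
    rw [show (1:ℝ) = Real.exp 0 from Real.exp_zero.symm]
    exact Real.exp_le_exp.mpr (by nlinarith)
  have h1 : w * (Real.exp (-(a*τ)) / (1 - Real.exp (-(a*T))))
      - w * (Real.exp (-(a*0)) / (1 - Real.exp (-(a*T))))
      = w * ((Real.exp (-(a*τ)) - 1) / (1 - Real.exp (-(a*T)))) := by
    rw [mul_zero, neg_zero, Real.exp_zero]; ring
  rw [h1, abs_mul, abs_div, abs_of_pos hd]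
  have h2 : |Real.exp (-(a*τ)) - 1| ≤ 1 - Real.exp (-(a*T)) := by
    rw [abs_sub_comm, abs_of_nonneg (by linarith)]; linarith
  calc |w| * (|Real.exp (-(a*τ)) - 1| / (1 - Real.exp (-(a*T))))
      ≤ |w| * 1 := by
        apply mul_le_mul_of_nonneg_left _ (abs_nonneg w)
        exact (div_le_one hd).mpr h2
    _ = |w| := mul_one _


theorem z_limits_at_zero (a₁ a₂ a₃ g₁ g₂ : ℝ)
    (ha₁ : 0 < a₁) (ha₂ : 0 < a₂) (ha₃ : 0 < a₃)
    (h₁₂ : a₁ ≠ a₂) (h₁₃ : a₁ ≠ a₃) (h₂₃ : a₂ ≠ a₃)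
    (hg₁ : 0 < g₁) (hg₂ : 0 < g₂) :
    Filter.Tendsto (zmaxF a₁ a₂ a₃ g₁ g₂) (nhdsWithin 0 (Set.Ioi 0)) Filter.atTop ∧
    Filter.Tendsto (zminF a₁ a₂ a₃ g₁ g₂) (nhdsWithin 0 (Set.Ioi 0)) Filter.atTop ∧
    ∃ Cb : ℝ, ∀ᶠ T in nhdsWithin (0:ℝ) (Set.Ioi 0),
      zmaxF a₁ a₂ a₃ g₁ g₂ T - zminF a₁ a₂ a₃ g₁ g₂ T ≤ Cb := by
  have h1 : a₂ - a₁ ≠ 0 := sub_ne_zero.mpr (Ne.symm h₁₂)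
  have h2 : a₃ - a₁ ≠ 0 := sub_ne_zero.mpr (Ne.symm h₁₃)
  have h3 : a₃ - a₂ ≠ 0 := sub_ne_zero.mpr (Ne.symm h₂₃)
  set p := g₁/(a₂-a₁) with hpdef
  set q := g₂/(a₃-a₂) with hqdef
  set r := g₁/(a₂-a₁)*g₂/(a₃-a₁) with hrdef
  have hp : p*(a₂-a₁) = g₁ := by rw [hpdef]; field_simp
  have hq : q*(a₃-a₂) = g₂ := by rw [hqdef]; field_simp
  have hr : r*(a₃-a₁) = p*g₂ := by rw [hrdef, hpdef]; field_simp
  set K := |r| + |p*q| + |p*q-r| with hKdef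
  set L := r/a₁ - p*q/a₂ + (p*q-r)/a₃ with hLdef
  have hLpos : 0 < L := by
    have hLeq : L = g₁*g₂/(a₁*a₂*a₃) := by
      rw [hLdef, hpdef, hqdef, hrdef]
      field_simp
      ring
    rw [hLeq]; positivity
  set F := fun T => zfun a₁ a₂ a₃ g₁ g₂ 0 T with hFdef
  -- limit of T * F T
  have hTF : Tendsto (fun T => T * F T) (𝓝[>] (0:ℝ)) (𝓝 L) := by
    have base : Tendsto (fun T => r * (T / (1 - Real.exp (-(a₁*T))))
        - p*q * (T / (1 - Real.exp (-(a₂*T))))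
        + (p*q-r) * (T / (1 - Real.exp (-(a₃*T))))) (𝓝[>] (0:ℝ))
        (𝓝 (r * a₁⁻¹ - p*q * a₂⁻¹ + (p*q-r) * a₃⁻¹)) := by
      exact (((tendsto_ratio ha₁).const_mul r).sub
        ((tendsto_ratio ha₂).const_mul (p*q))).add ((tendsto_ratio ha₃).const_mul (p*q-r))
    have hLval : r * a₁⁻¹ - p*q * a₂⁻¹ + (p*q-r) * a₃⁻¹ = L := by
      rw [hLdef]; field_simp
    rw [hLval] at base
    refine base.congr' ?_
    filter_upwards [self_mem_nhdsWithin] with T (hT : 0 < T)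
    simp only [hFdef]
    rw [zfun_eq a₁ a₂ a₃ g₁ g₂ p q r hp hq hr ha₁ ha₂ ha₃ hT 0]
    simp only [mul_zero, neg_zero, Real.exp_zero]
    field_simp
  have hF : Tendsto F (𝓝[>] (0:ℝ)) atTop := by
    have hinv : Tendsto (fun T : ℝ => T⁻¹) (𝓝[>] (0:ℝ)) atTop := tendsto_inv_nhdsGT_zero
    have := Filter.Tendsto.pos_mul_atTop hLpos hTF hinv
    refine this.congr' ?_
    filter_upwards [self_mem_nhdsWithin] with T (hT : 0 < T)
    field_simp
  -- pointwise bound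
  have hbound : ∀ T : ℝ, 0 < T → ∀ τ ∈ Set.Icc (0:ℝ) T,
      |zfun a₁ a₂ a₃ g₁ g₂ τ T - F T| ≤ K := by
    intro T hT τ hτ
    obtain ⟨hτ0, hτT⟩ := hτ
    simp only [hFdef]
    rw [zfun_eq a₁ a₂ a₃ g₁ g₂ p q r hp hq hr ha₁ ha₂ ha₃ hT τ,
      zfun_eq a₁ a₂ a₃ g₁ g₂ p q r hp hq hr ha₁ ha₂ ha₃ hT 0]
    have b1 := term_bound r a₁ τ T ha₁ hT hτ0 hτT
    have b2 := term_bound (p*q) a₂ τ T ha₂ hT hτ0 hτT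
    have b3 := term_bound (p*q-r) a₃ τ T ha₃ hT hτ0 hτT
    set A := r * (Real.exp (-(a₁*τ)) / (1 - Real.exp (-(a₁*T))))
    set A' := r * (Real.exp (-(a₁*0)) / (1 - Real.exp (-(a₁*T))))
    set B := p*q * (Real.exp (-(a₂*τ)) / (1 - Real.exp (-(a₂*T))))
    set B' := p*q * (Real.exp (-(a₂*0)) / (1 - Real.exp (-(a₂*T))))
    set C := (p*q-r) * (Real.exp (-(a₃*τ)) / (1 - Real.exp (-(a₃*T))))
    set C' := (p*q-r) * (Real.exp (-(a₃*0)) / (1 - Real.exp (-(a₃*T))))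
    have he : A - B + C - (A' - B' + C') = (A - A') - (B - B') + (C - C') := by ring
    rw [he]
    calc |(A - A') - (B - B') + (C - C')| ≤ |(A - A') - (B - B')| + |C - C'| := abs_add_le _ _
      _ ≤ |A - A'| + |B - B'| + |C - C'| := by
          have := abs_sub (A - A') (B - B')
          linarith
      _ ≤ K := by rw [hKdef]; linarith
  -- sup/inf facts for each T > 0
  have hfacts : ∀ T : ℝ, 0 < T →
      F T ≤ zmaxF a₁ a₂ a₃ g₁ g₂ T ∧
      F T - K ≤ zminF a₁ a₂ a₃ g₁ g₂ T ∧
      zmaxF a₁ a₂ a₃ g₁ g₂ T ≤ F T + K := by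
    intro T hT
    set S := (fun τ => zfun a₁ a₂ a₃ g₁ g₂ τ T) '' Set.Icc 0 T with hSdef
    have hmem : F T ∈ S := ⟨0, ⟨le_refl 0, hT.le⟩, rfl⟩
    have hub : ∀ x ∈ S, x ≤ F T + K := by
      rintro x ⟨τ, hτ, rfl⟩
      have := hbound T hT τ hτ
      have := abs_le.mp this
      linarith [this.2]
    have hlb : ∀ x ∈ S, F T - K ≤ x := by
      rintro x ⟨τ, hτ, rfl⟩
      have := abs_le.mp (hbound T hT τ hτ)
      linarith [this.1]
    have hne : S.Nonempty := ⟨F T, hmem⟩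
    refine ⟨le_csSup ⟨F T + K, fun x hx => hub x hx⟩ hmem, ?_, csSup_le hne hub⟩
    exact le_csInf hne hlb
  have hev : ∀ᶠ T in 𝓝[>] (0:ℝ),
      F T ≤ zmaxF a₁ a₂ a₃ g₁ g₂ T ∧
      F T - K ≤ zminF a₁ a₂ a₃ g₁ g₂ T ∧
      zmaxF a₁ a₂ a₃ g₁ g₂ T ≤ F T + K := by
    filter_upwards [self_mem_nhdsWithin] with T (hT : 0 < T)
    exact hfacts T hT
  refine ⟨?_, ?_, ?_⟩
  · exact tendsto_atTop_mono' _ (hev.mono fun T h => h.1) hF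
  · have hFK : Tendsto (fun T => F T - K) (𝓝[>] (0:ℝ)) atTop := by
      simpa [sub_eq_add_neg] using tendsto_atTop_add_const_right (𝓝[>] (0:ℝ)) (-K) hF
    exact tendsto_atTop_mono' _ (hev.mono fun T h => h.2.1) hFK
  · refine ⟨2*K, ?_⟩
    filter_upwards [hev] with T h
    linarith [h.2.1, h.2.2]
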